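/- Loop formula lemma: let A_0,…,A_n and B_0,…,B_n be conjunctions of literals and l a literal such that, for every i with 0 ≤ i ≤ n, the propositional formulae B_i ⇒ ¬l and B_i ⇒ (A_0 ∨ … ∨ A_n) are valid. Then the formula □(⋀_{i=0}^{n} (A_i ⇒ ◯B_i)) ⇒ □((A_0 ∨ … ∨ A_n) ⇒ ◯□¬l) is valid. -/

import Mathlib

/-- Syntax of Propositional Linear Temporal Logic over proposition symbols `P`. -/
inductive PLTL (P : Type) : Type
  | tru : PLTL P
  | fls : PLTL P
  | start : PLTL P
  | atom : P → PLTL P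
  | neg : PLTL P → PLTL P
  | conj : PLTL P → PLTL P → PLTL P
  | disj : PLTL P → PLTL P → PLTL P
  | impl : PLTL P → PLTL P → PLTL P
  | next : PLTL P → PLTL P
  | evtl : PLTL P → PLTL P
  | alw : PLTL P → PLTL P
  | untl : PLTL P → PLTL P → PLTL P
  | unls : PLTL P → PLTL P → PLTL P

namespace PLTL

/-- Satisfaction `(σ, i) ⊨ A` of a PLTL formula in a model `σ : ℕ → Set P` at index `i`. -/
def Sat {P : Type} (σ : ℕ → Set P) : PLTL P → ℕ → Prop
  | tru, _ => True
  | fls, _ => False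
  | start, i => i = 0
  | atom p, i => p ∈ σ i
  | neg A, i => ¬ Sat σ A i
  | conj A B, i => Sat σ A i ∧ Sat σ B i
  | disj A B, i => Sat σ A i ∨ Sat σ B i
  | impl A B, i => Sat σ A i → Sat σ B i
  | next A, i => Sat σ A (i + 1)
  | evtl A, i => ∃ k, i ≤ k ∧ Sat σ A k
  | alw A, i => ∀ j, i ≤ j → Sat σ A j
  | untl A B, i => ∃ k, i ≤ k ∧ Sat σ B k ∧ ∀ j, i ≤ j → j < k → Sat σ A j
  | unls A B, i =>
      (∃ k, i ≤ k ∧ Sat σ B k ∧ ∀ j, i ≤ j → j < k → Sat σ A j) ∨ (∀ j, i ≤ j → Sat σ A j)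

/-- A formula is valid iff it is satisfied at index 0 of every model. -/
def Valid {P : Type} (A : PLTL P) : Prop := ∀ σ : ℕ → Set P, Sat σ A 0

/-- A formula with no temporal connectives is propositionally valid iff
it is satisfied at every index of every model. -/
def PropValid {P : Type} (A : PLTL P) : Prop := ∀ (σ : ℕ → Set P) (i : ℕ), Sat σ A i

/-- A literal is a proposition symbol or a negated proposition symbol. -/
def IsLiteral {P : Type} : PLTL P → Prop
  | atom _ => True
  | neg (atom _) => True
  | _ => False

/-- A conjunction of literals. -/
def IsConjLits {P : Type} : PLTL P → Prop
  | atom _ => True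
  | neg (atom _) => True
  | conj A B => IsConjLits A ∧ IsConjLits B
  | _ => False

/-- Biconditional `A ⇔ B` as an abbreviation. -/
def piff {P : Type} (A B : PLTL P) : PLTL P := conj (impl A B) (impl B A)

/-- Finite disjunction. -/
def bigOr {P : Type} (l : List (PLTL P)) : PLTL P := l.foldr disj fls

/-- Finite conjunction. -/
def bigAnd {P : Type} (l : List (PLTL P)) : PLTL P := l.foldr conj tru

/-- The proposition symbols occurring in a formula. -/
def syms {P : Type} : PLTL P → Set P
  | tru => ∅
  | fls => ∅
  | start => ∅
  | atom p => {p}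
  | neg A => syms A
  | conj A B => syms A ∪ syms B
  | disj A B => syms A ∪ syms B
  | impl A B => syms A ∪ syms B
  | next A => syms A
  | evtl A => syms A
  | alw A => syms A
  | untl A B => syms A ∪ syms B
  | unls A B => syms A ∪ syms B

end PLTL


open PLTL in
lemma satBigOr {P : Type} (σ : ℕ → Set P) (L : List (PLTL P)) (i : ℕ) :
    Sat σ (bigOr L) i ↔ ∃ C ∈ L, Sat σ C i := by
  induction L with
  | nil => simp [bigOr, Sat]
  | cons a t ih =>
      show Sat σ (disj a (bigOr t)) i ↔ _
      simp only [Sat, ih, List.mem_cons]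
      constructor
      · rintro (h | ⟨C, hC, hS⟩)
        exacts [⟨a, Or.inl rfl, h⟩, ⟨C, Or.inr hC, hS⟩]
      · rintro ⟨C, (rfl | hC), hS⟩
        exacts [Or.inl hS, Or.inr ⟨C, hC, hS⟩]

open PLTL in
lemma satBigAnd {P : Type} (σ : ℕ → Set P) (L : List (PLTL P)) (i : ℕ) :
    Sat σ (bigAnd L) i ↔ ∀ C ∈ L, Sat σ C i := by
  induction L with
  | nil => simp [bigAnd, Sat]
  | cons a t ih =>
      show Sat σ (conj a (bigAnd t)) i ↔ _
      simp only [Sat, ih, List.mem_cons]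
      constructor
      · rintro ⟨h1, h2⟩ C (rfl | hC)
        exacts [h1, h2 C hC]
      · intro h
        exact ⟨h a (Or.inl rfl), fun C hC => h C (Or.inr hC)⟩

open PLTL in
/-- loop formula lemma. If each Bᵢ propositionally implies ¬l and the
disjunction of the Aⱼ's, then □(⋀ᵢ (Aᵢ ⇒ ◯Bᵢ)) ⇒ □((⋁ᵢ Aᵢ) ⇒ ◯□¬l) is valid. -/
theorem stmt_5 {P : Type} [Countable P] (n : ℕ) (A B : Fin (n + 1) → PLTL P) (l : PLTL P)
    (hA : ∀ i, IsConjLits (A i)) (hB : ∀ i, IsConjLits (B i)) (hl : IsLiteral l)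
    (h1 : ∀ i, PropValid (impl (B i) (neg l)))
    (h2 : ∀ i, PropValid (impl (B i) (bigOr (List.ofFn A)))) :
    Valid (impl
      (alw (bigAnd (List.ofFn fun i => impl (A i) (next (B i)))))
      (alw (impl (bigOr (List.ofFn A)) (next (alw (neg l)))))) := by
  intro σ
  simp only [Sat]
  intro h j _ hOr
  -- key: from some A at time t, get some A at t+1 and ¬l at t+1
  have step : ∀ t, (∃ i, Sat σ (A i) t) → (∃ i, Sat σ (A i) (t+1)) ∧ ¬ Sat σ l (t+1) := by
    intro t ⟨i, hAi⟩
    have hall := h t (Nat.zero_le t)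
    rw [satBigAnd] at hall
    have hBi : Sat σ (B i) (t+1) := by
      have := hall (impl (A i) (next (B i))) ((List.mem_ofFn).mpr ⟨i, rfl⟩)
      exact this hAi
    constructor
    · have := h2 i σ (t+1) hBi
      rw [satBigOr] at this
      obtain ⟨C, hC, hSat⟩ := this
      rw [List.mem_ofFn] at hC
      obtain ⟨k, rfl⟩ := hC
      exact ⟨k, hSat⟩
    · exact h1 i σ (t+1) hBi
  rw [satBigOr] at hOr
  obtain ⟨C, hC, hSat⟩ := hOr
  rw [List.mem_ofFn] at hC
  obtain ⟨k, rfl⟩ := hC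
  have main : ∀ m, ∃ i, Sat σ (A i) (j + m) := by
    intro m
    induction m with
    | zero => exact ⟨k, hSat⟩
    | succ m ih => exact (step _ ih).1
  intro k hk
  obtain ⟨m, rfl⟩ : ∃ m, k = j + m + 1 := ⟨k - j - 1, by omega⟩
  exact (step _ (main m)).2
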